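/- Let A be a finite alphabet and p ≥ 2 a natural number. Let s_1, …, s_p, t_1, …, t_p, and w be nonempty words over A with w = s_1 t_1 = s_2 t_2 = ⋯ = s_p t_p and |s_1| > |s_2| > ⋯ > |s_p|. Suppose there are words s and t over A with |s| ≥ |w| and |t| ≥ |w| such that each s_i is a suffix of s and each t_i is a prefix of t. Then w is periodic with period gcd(|s_1| − |s_2|, |s_2| − |s_3|, …, |s_{p−1}| − |s_p|). -/

import Mathlib

/-- A word `w` (a finite sequence over an alphabet) is periodic with period `p`
if `w_i = w_{i+p}` for every valid index, i.e. for all `i` with `i + p < |w|`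
(0-indexed), the letters at positions `i` and `i + p` agree. -/
def IsPeriodicWith {A : Type*} (w : List A) (p : ℕ) : Prop :=
  ∀ i : ℕ, ∀ h : i + p < w.length,
    w.get ⟨i, by omega⟩ = w.get ⟨i + p, h⟩

lemma getElem_idx_congr {A : Type*} {l : List A} {i j : ℕ} (h : i = j) (hi : i < l.length) :
    l[i] = l[j]'(h ▸ hi) := by subst h; rfl

lemma key {A : Type*} {w S T : List A} {a b : ℕ} (hab : a ≤ b) (hb : b ≤ w.length)
    (hSb : b ≤ S.length)
    (hsa : (w.take a).IsSuffix S) (hsb : (w.take b).IsSuffix S)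
    (hta : (w.drop a).IsPrefix T) (htb : (w.drop b).IsPrefix T) :
    IsPeriodicWith w (b - a) := by
  intro m hm
  show w[m] = w[m + (b - a)]
  have la : (w.take a).length = a := by rw [List.length_take]; omega
  have lb : (w.take b).length = b := by rw [List.length_take]; omega
  by_cases hc : m < a
  · have e1 := hsa.getElem (i := m) (by omega)
    have e2 := hsb.getElem (i := m + (b - a)) (by omega)
    simp only [la] at e1
    simp only [lb] at e2
    rw [List.getElem_take] at e1 e2
    rw [e1, e2]
    exact getElem_idx_congr (by omega) _
  · have lda : (w.drop a).length = w.length - a := by rw [List.length_drop]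
    have ldb : (w.drop b).length = w.length - b := by rw [List.length_drop]
    have e1 := hta.getElem (i := m - a) (by omega)
    have e2 := htb.getElem (i := m + (b - a) - b) (by omega)
    rw [List.getElem_drop] at e1 e2
    have i1 : a + (m - a) = m := by omega
    have i2 : b + (m + (b - a) - b) = m + (b - a) := by omega
    rw [getElem_idx_congr i1.symm, e1, getElem_idx_congr i2.symm, e2]
    exact getElem_idx_congr (by omega) _

lemma period_sub {A : Type*} {w : List A} {a b : ℕ} (ha : IsPeriodicWith w a)
    (hb : IsPeriodicWith w b) (hab : a ≤ b) (hn : a + b ≤ w.length) :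
    IsPeriodicWith w (b - a) := by
  intro i hi
  show w[i] = w[i + (b - a)]
  by_cases hc : i + b < w.length
  · have h1 : w[i] = w[i + b] := hb i hc
    have h2 : w[i + (b - a)] = w[i + (b - a) + a] := ha (i + (b - a)) (by omega)
    rw [h1, h2]
    exact (getElem_idx_congr (by omega) _).symm
  · have h1 : w[i - a] = w[i - a + a] := ha (i - a) (by omega)
    have h2 : w[i - a] = w[i - a + b] := hb (i - a) (by omega)
    rw [getElem_idx_congr (show i = i - a + a by omega), ← h1, h2]
    exact getElem_idx_congr (by omega) _

lemma fw {A : Type*} : ∀ (N : ℕ) (w : List A) (a b : ℕ), a + b ≤ N → a + b ≤ w.length →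
    IsPeriodicWith w a → IsPeriodicWith w b → IsPeriodicWith w (Nat.gcd a b) := by
  intro N
  induction N with
  | zero =>
    intro w a b hN _ _ _
    have ha : a = 0 := by omega
    have hb : b = 0 := by omega
    subst ha; subst hb
    intro i h; rfl
  | succ N ih =>
    intro w a b hN hw ha hb
    rcases Nat.eq_zero_or_pos a with rfl | hapos
    · simpa using hb
    rcases Nat.eq_zero_or_pos b with rfl | hbpos
    · simpa using ha
    rcases le_total a b with h | h
    · rw [← Nat.gcd_sub_self_right h]
      exact ih w a (b - a) (by omega) (by omega) ha (period_sub ha hb h hw)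
    · rw [← Nat.gcd_sub_self_left h]
      exact ih w (a - b) b (by omega) (by omega) (period_sub hb ha h (by omega)) hb


/-- Let `A` be a finite alphabet and `p ≥ 2`. Let `s 0, …, s (p-1)`,
`t 0, …, t (p-1)` and `w` be nonempty words over `A` with `w = s i ++ t i`
for every `i < p` and `|s 0| > |s 1| > ⋯ > |s (p-1)|`. Suppose there are
words `S` and `T` with `|S| ≥ |w|`, `|T| ≥ |w|`, each `s i` a suffix of `S`
and each `t i` a prefix of `T`. Then `w` is periodic with period
`gcd (|s 0| − |s 1|, …, |s (p-2)| − |s (p-1)|)`. -/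
theorem periodic_with_gcd_of_splittings {A : Type*} [Fintype A]
    (p : ℕ) (hp : 2 ≤ p) (s t : ℕ → List A) (w S T : List A)
    (hwne : w ≠ [])
    (hsne : ∀ i < p, s i ≠ []) (htne : ∀ i < p, t i ≠ [])
    (hsplit : ∀ i < p, w = s i ++ t i)
    (hdec : ∀ i, i + 1 < p → (s (i + 1)).length < (s i).length)
    (hS : w.length ≤ S.length) (hT : w.length ≤ T.length)
    (hsuf : ∀ i < p, (s i).IsSuffix S) (hpre : ∀ i < p, (t i).IsPrefix T) :
    IsPeriodicWith w
      ((Finset.range (p - 1)).gcd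
        (fun i => (s i).length - (s (i + 1)).length)) := by
  set n := w.length with hn
  set d : ℕ → ℕ := fun i => (s i).length - (s (i + 1)).length with hd
  have hlen : ∀ i < p, (s i).length + (t i).length = n := by
    intro i hi
    have := congrArg List.length (hsplit i hi)
    simpa using this.symm
  have hsle : ∀ i < p, (s i).length ≤ n := fun i hi => by have := hlen i hi; omega
  have mono : ∀ i j, i ≤ j → j < p → (s j).length ≤ (s i).length := by
    intro i j hij hj
    induction j with
    | zero => have : i = 0 := by omega
              subst this; exact le_refl _
    | succ j ihj =>
      rcases Nat.lt_or_ge i (j + 1) with h | h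
      · exact le_trans (le_of_lt (hdec j hj)) (ihj (by omega) (by omega))
      · have : i = j + 1 := by omega
        subst this; exact le_refl _
  have htake : ∀ i < p, w.take (s i).length = s i := by
    intro i hi; rw [hsplit i hi]; exact List.take_left
  have hdrop : ∀ i < p, w.drop (s i).length = t i := by
    intro i hi; rw [hsplit i hi]; exact List.drop_left
  have hper : ∀ i, i + 1 < p → IsPeriodicWith w (d i) := by
    intro i hi
    refine key (S := S) (T := T) (le_of_lt (hdec i hi)) (hsle i (by omega))
      (le_trans ((hsuf i (by omega)).length_le) (le_refl _)) ?_ ?_ ?_ ?_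
    · rw [htake (i + 1) hi]; exact hsuf (i + 1) hi
    · rw [htake i (by omega)]; exact hsuf i (by omega)
    · rw [hdrop (i + 1) hi]; exact hpre (i + 1) hi
    · rw [hdrop i (by omega)]; exact hpre i (by omega)
  have hd0 : 0 < d 0 := by
    have := hdec 0 (by omega); simp only [zero_add] at this; simp only [hd, zero_add]; omega
  have main : ∀ k, k + 1 < p →
      IsPeriodicWith w ((Finset.range (k + 1)).gcd d) ∧ (Finset.range (k + 1)).gcd d ∣ d 0 := by
    intro k
    induction k with
    | zero =>
      intro h
      have : (Finset.range 1).gcd d = d 0 := by simp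
      rw [this]
      exact ⟨hper 0 h, dvd_refl _⟩
    | succ k ihk =>
      intro h
      obtain ⟨ih1, ih2⟩ := ihk (by omega)
      have grange : (Finset.range (k + 2)).gcd d
          = Nat.gcd (d (k + 1)) ((Finset.range (k + 1)).gcd d) := by
        rw [Finset.range_add_one, Finset.gcd_insert]; rfl
      have hglen : (Finset.range (k + 1)).gcd d ≤ d 0 := Nat.le_of_dvd hd0 ih2
      have hsum : d (k + 1) + d 0 ≤ n := by
        have h1 : (s (k + 1)).length ≤ (s 1).length := mono 1 (k + 1) (by omega) (by omega)
        have h0 : (s 1).length ≤ (s 0).length := mono 0 1 (by omega) (by omega)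
        have h2 : (s 0).length ≤ n := hsle 0 (by omega)
        simp only [hd, zero_add]; omega
      constructor
      · rw [grange]
        exact fw n w (d (k + 1)) ((Finset.range (k + 1)).gcd d) (by omega) (by omega)
          (hper (k + 1) h) ih1
      · rw [grange]
        exact dvd_trans (Nat.gcd_dvd_right _ _) ih2
  have hp1 : p - 1 = (p - 2) + 1 := by omega
  rw [show (Finset.range (p - 1)).gcd d = (Finset.range ((p - 2) + 1)).gcd d by rw [← hp1]]
  exact (main (p - 2) (by omega)).1
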